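/- Let θ : Fin N → ℝ satisfy: θ_0 ≡ π/4 (mod 2π) or θ_0 ≡ 5π/4 (mod 2π), and θ_n + θ_{−n} ≡ π/2 (mod 2π) for every n ∈ Fin N with n ≠ 0 (where −n denotes negation in Fin N). Define a_k = (√2/N) · ∑_{n ∈ Fin N} cos((2πn/N)·k + θ_n) for each k ∈ Fin N. Then a is a cyclic orthonormal generator in ℝ^N, i.e. for every s ∈ Fin N, ∑_{j ∈ Fin N} a_j · a_{j+s} equals 1 when s = 0 and equals 0 otherwise. -/

import Mathlib

open Real

theorem canonical_form_is_cog (N : ℕ) (hN : 2 ≤ N) [NeZero N] (θ : Fin N → ℝ)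
    (hθ0 : (∃ m : ℤ, θ 0 = π / 4 + 2 * π * m) ∨ (∃ m : ℤ, θ 0 = 5 * π / 4 + 2 * π * m))
    (hθ : ∀ n : Fin N, n ≠ 0 → ∃ m : ℤ, θ n + θ (-n) = π / 2 + 2 * π * m)
    (a : Fin N → ℝ)
    (hdef : ∀ k : Fin N,
      a k = (Real.sqrt 2 / N) *
        ∑ n : Fin N, Real.cos ((2 * π * (n : ℕ) / N) * (k : ℕ) + θ n)) :
    ∀ s : Fin N, (∑ j : Fin N, a j * a (j + s)) = if s = 0 then 1 else 0 := by
  intro s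
  have hN0 : N ≠ 0 := by omega
  have hNC : (N : ℂ) ≠ 0 := Nat.cast_ne_zero.mpr hN0
  set ω : ℂ := Complex.exp (2 * π * Complex.I / N) with hωdef
  have hprim : IsPrimitiveRoot ω N := Complex.isPrimitiveRoot_exp N hN0
  have hωN : ω ^ N = 1 := hprim.pow_eq_one
  have hω0 : ω ≠ 0 := Complex.exp_ne_zero _
  have hdvd : ∀ x : ℕ, N ∣ x → ω ^ x = 1 := by
    rintro x ⟨c, rfl⟩; rw [pow_mul, hωN, one_pow]
  have hmod : ∀ x y : ℕ, x % N = y % N → ω ^ x = ω ^ y := by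
    have key : ∀ x : ℕ, ω ^ x = ω ^ (x % N) := by
      intro x
      conv_lhs => rw [← Nat.div_add_mod x N]
      rw [pow_add, pow_mul, hωN, one_pow, one_mul]
    intro x y h
    rw [key x, key y, h]
  -- N ∣ (-n).val + n.val
  have hnegval : ∀ n : Fin N, N ∣ ((-n : Fin N) : ℕ) + (n : ℕ) := by
    intro n
    apply Nat.dvd_of_mod_eq_zero
    have : ((-n + n : Fin N) : ℕ) = 0 := by rw [neg_add_cancel]; rfl
    rwa [Fin.val_add] at this
  have hconjω : starRingEnd ℂ ω = Complex.exp (-(2 * π * Complex.I / N)) := by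
    rw [← Complex.exp_conj]
    congr 1
    simp [map_div₀, Complex.conj_I, map_mul, map_ofNat, Complex.conj_ofReal]
    ring
  have hconjmul : starRingEnd ℂ ω * ω = 1 := by
    rw [hconjω, ← Complex.exp_add, neg_add_cancel, Complex.exp_zero]
  have hcω : ∀ (n : Fin N) (k : ℕ),
      starRingEnd ℂ (ω ^ ((n : ℕ) * k)) = ω ^ (((-n : Fin N) : ℕ) * k) := by
    intro n k
    have h1 : starRingEnd ℂ (ω ^ ((n:ℕ) * k)) * ω ^ ((n:ℕ) * k) = 1 := by
      rw [map_pow, ← mul_pow, hconjmul, one_pow]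
    have h2 : ω ^ (((-n : Fin N) : ℕ) * k) * ω ^ ((n:ℕ) * k) = 1 := by
      rw [← pow_add, ← add_mul]
      exact hdvd _ (Dvd.dvd.mul_right (hnegval n) k)
    have := h1.trans h2.symm
    exact mul_right_cancel₀ (pow_ne_zero _ hω0) this
  set c : Fin N → ℂ := fun n => Complex.exp (θ n * Complex.I) with hcdef
  have hcunit : ∀ n : Fin N, c n * starRingEnd ℂ (c n) = 1 := by
    intro n
    simp only [hcdef, ← Complex.exp_conj, ← Complex.exp_add]
    rw [show starRingEnd ℂ ((θ n : ℂ) * Complex.I) = -((θ n : ℂ) * Complex.I) by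
      simp [Complex.conj_I]]
    rw [add_neg_cancel, Complex.exp_zero]
  have hkey : ∀ (x : ℝ) (m : ℤ), x = π/2 + 2*π*m → Complex.exp (x * Complex.I) = Complex.I := by
    intro x m hx
    rw [hx]
    push_cast
    rw [show ((π:ℂ)/2 + 2*π*m) * Complex.I = (π/2)*Complex.I + m*(2*π*Complex.I) by ring]
    rw [Complex.exp_add, Complex.exp_int_mul, Complex.exp_two_pi_mul_I, one_zpow, mul_one]
    rw [show ((π:ℂ)/2)*Complex.I = ((π/2 : ℝ):ℂ)*Complex.I by push_cast; ring]
    rw [Complex.exp_mul_I, ← Complex.ofReal_cos, ← Complex.ofReal_sin,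
      Real.cos_pi_div_two, Real.sin_pi_div_two]
    simp
  have hcc : ∀ n : Fin N, c n * c (-n) = Complex.I := by
    intro n
    have : c n * c (-n) = Complex.exp ((θ n + θ (-n) : ℝ) * Complex.I) := by
      simp only [hcdef, ← Complex.exp_add]
      rw [Complex.ofReal_add]
      ring_nf
    rw [this]
    by_cases hn : n = 0
    · subst hn
      rw [neg_zero]
      rcases hθ0 with ⟨m, hm⟩ | ⟨m, hm⟩
      · exact hkey _ (2*m) (by rw [hm]; push_cast; ring)
      · exact hkey _ (2*m+1) (by rw [hm]; push_cast; ring)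
    · obtain ⟨m, hm⟩ := hθ n hn
      exact hkey _ m hm
  set b : Fin N → ℂ := fun n => c n + starRingEnd ℂ (c (-n)) with hbdef
  have hbb : ∀ n : Fin N, b n * b (-n) = 2 := by
    intro n
    have expand : b n * b (-n) = c n * c (-n) + c n * starRingEnd ℂ (c n)
        + c (-n) * starRingEnd ℂ (c (-n)) + starRingEnd ℂ (c n * c (-n)) := by
      simp only [hbdef, neg_neg, map_mul]
      ring
    rw [expand, hcc n, hcunit n, hcunit (-n), Complex.conj_I]
    ring
  -- Step A
  have hA : ∀ k : Fin N, ((a k : ℝ) : ℂ)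
      = ((Real.sqrt 2 / N : ℝ) : ℂ) * ((∑ n : Fin N, ω ^ ((n : ℕ) * (k : ℕ)) * b n) / 2) := by
    intro k
    rw [hdef k, Complex.ofReal_mul, Complex.ofReal_sum]
    simp only [Complex.ofReal_cos]
    congr 1
    have term : ∀ n : Fin N,
        Complex.cos (((2 * π * (n:ℕ) / N) * (k:ℕ) + θ n : ℝ) : ℂ)
        = (ω ^ ((n:ℕ) * (k:ℕ)) * c n
          + ω ^ (((-n : Fin N):ℕ) * (k:ℕ)) * starRingEnd ℂ (c n)) / 2 := by
      intro n
      rw [Complex.cos]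
      have e1 : Complex.exp ((((2 * π * (n:ℕ) / N) * (k:ℕ) + θ n : ℝ) : ℂ) * Complex.I)
          = ω ^ ((n:ℕ) * (k:ℕ)) * c n := by
        rw [show (((2 * π * (n:ℕ) / N) * (k:ℕ) + θ n : ℝ) : ℂ) * Complex.I
          = ((n:ℕ)*(k:ℕ) : ℕ) * (2 * π * Complex.I / N) + (θ n : ℂ) * Complex.I by
            push_cast; ring]
        rw [Complex.exp_add, Complex.exp_nat_mul]
      have e2 : Complex.exp (-(((2 * π * (n:ℕ) / N) * (k:ℕ) + θ n : ℝ) : ℂ) * Complex.I)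
          = ω ^ (((-n : Fin N):ℕ) * (k:ℕ)) * starRingEnd ℂ (c n) := by
        have : (-(((2 * π * (n:ℕ) / N) * (k:ℕ) + θ n : ℝ) : ℂ)) * Complex.I
            = starRingEnd ℂ ((((2 * π * (n:ℕ) / N) * (k:ℕ) + θ n : ℝ) : ℂ) * Complex.I) := by
          rw [map_mul, Complex.conj_I, Complex.conj_ofReal]; ring
        rw [this, Complex.exp_conj, e1, map_mul, hcω]
      rw [e1, e2]
    rw [Finset.sum_congr rfl (fun n _ => term n)]
    rw [← Finset.sum_div]
    congr 1
    rw [Finset.sum_add_distrib]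
    have reidx : (∑ n : Fin N, ω ^ (((-n : Fin N):ℕ) * (k:ℕ)) * starRingEnd ℂ (c n))
        = ∑ n : Fin N, ω ^ ((n:ℕ) * (k:ℕ)) * starRingEnd ℂ (c (-n)) := by
      apply Fintype.sum_equiv (Equiv.neg (Fin N))
      intro x
      simp [neg_neg]
    rw [reidx, ← Finset.sum_add_distrib]
    simp only [hbdef, mul_add]
  -- geometric sum
  have hgeom : ∀ z : ℂ, z ^ N = 1 → (∑ j : Fin N, z ^ (j : ℕ)) = if z = 1 then (N:ℂ) else 0 := by
    intro z hz
    by_cases h1 : z = 1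
    · simp [h1]
    · rw [if_neg h1, Fin.sum_univ_eq_sum_range (fun i => z ^ i), geom_sum_eq h1, hz]
      simp
  have hiff : ∀ n m : Fin N, (ω ^ ((n:ℕ) + (m:ℕ)) = 1) ↔ m = -n := by
    intro n m
    rw [hprim.pow_eq_one_iff_dvd]
    constructor
    · intro h
      have h2 : (n + m : Fin N) = 0 := by
        have hv : ((n + m : Fin N) : ℕ) = 0 := by
          rw [Fin.val_add]
          omega
        exact Fin.ext hv
      exact eq_neg_of_add_eq_zero_right h2
    · rintro rfl
      simpa [add_comm] using hnegval n
  -- exponent normalization for shifted index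
  have hns : ∀ j m : Fin N,
      ω ^ ((m:ℕ) * ((j + s : Fin N):ℕ)) = ω ^ ((m:ℕ)*(j:ℕ) + (m:ℕ)*(s:ℕ)) := by
    intro j m
    apply hmod
    calc (m:ℕ) * ((j + s : Fin N):ℕ) % N
        = (m:ℕ) * ((j:ℕ) + (s:ℕ)) % N := Nat.ModEq.mul_left _ (by
          rw [Fin.val_add]; exact Nat.mod_modEq _ _)
      _ = ((m:ℕ)*(j:ℕ) + (m:ℕ)*(s:ℕ)) % N := by rw [Nat.mul_add]
  have hs0 : ω ^ (s:ℕ) = 1 ↔ s = 0 := by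
    rw [hprim.pow_eq_one_iff_dvd]
    constructor
    · intro h
      apply Fin.ext
      rcases Nat.eq_zero_or_pos (s:ℕ) with h0 | h0
      · exact h0
      · exact absurd (Nat.le_of_dvd h0 h) (by have := s.isLt; omega)
    · rintro rfl
      simp
  set C : ℂ := ((Real.sqrt 2 / N : ℝ) : ℂ) with hC
  have hC2 : C ^ 2 * N * N = 2 := by
    rw [hC, ← Complex.ofReal_pow, div_pow, Real.sq_sqrt (by norm_num : (2:ℝ) ≥ 0)]
    push_cast
    field_simp
  have main : (∑ j : Fin N, ((a j : ℝ):ℂ) * ((a (j+s) : ℝ):ℂ)) = if s = 0 then (1:ℂ) else 0 := by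
    have step1 : ∀ j : Fin N,
        ((a j : ℝ):ℂ) * ((a (j+s) : ℝ):ℂ)
        = ∑ n : Fin N, ∑ m : Fin N,
            (C^2/4 * (b n * b m) * ω ^ ((m:ℕ)*(s:ℕ))) * (ω ^ ((n:ℕ)+(m:ℕ))) ^ (j:ℕ) := by
      intro j
      rw [hA j, hA (j+s)]
      rw [show (C * ((∑ n : Fin N, ω ^ ((n:ℕ)*(j:ℕ)) * b n)/2))
            * (C * ((∑ n : Fin N, ω ^ ((n:ℕ)*((j+s : Fin N):ℕ)) * b n)/2))
          = C^2/4 * ((∑ n : Fin N, ω ^ ((n:ℕ)*(j:ℕ)) * b n)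
            * (∑ n : Fin N, ω ^ ((n:ℕ)*((j+s : Fin N):ℕ)) * b n)) by ring]
      rw [Finset.sum_mul_sum, Finset.mul_sum]
      refine Finset.sum_congr rfl fun n _ => ?_
      rw [Finset.mul_sum]
      refine Finset.sum_congr rfl fun m _ => ?_
      rw [hns j m, ← pow_mul]
      rw [show ((n:ℕ)+(m:ℕ))*(j:ℕ) = (n:ℕ)*(j:ℕ) + ((m:ℕ)*(j:ℕ)) by ring]
      rw [pow_add, pow_add]
      ring
    calc (∑ j : Fin N, ((a j : ℝ):ℂ) * ((a (j+s) : ℝ):ℂ))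
        = ∑ j : Fin N, ∑ n : Fin N, ∑ m : Fin N,
            (C^2/4 * (b n * b m) * ω ^ ((m:ℕ)*(s:ℕ))) * (ω ^ ((n:ℕ)+(m:ℕ))) ^ (j:ℕ) :=
          Finset.sum_congr rfl fun j _ => step1 j
      _ = ∑ n : Fin N, ∑ m : Fin N, ∑ j : Fin N,
            (C^2/4 * (b n * b m) * ω ^ ((m:ℕ)*(s:ℕ))) * (ω ^ ((n:ℕ)+(m:ℕ))) ^ (j:ℕ) := by
          rw [Finset.sum_comm]
          exact Finset.sum_congr rfl fun n _ => Finset.sum_comm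
      _ = ∑ n : Fin N, ∑ m : Fin N,
            (C^2/4 * (b n * b m) * ω ^ ((m:ℕ)*(s:ℕ)))
              * (if m = -n then (N:ℂ) else 0) := by
          refine Finset.sum_congr rfl fun n _ => Finset.sum_congr rfl fun m _ => ?_
          rw [← Finset.mul_sum]
          have hzN : (ω ^ ((n:ℕ)+(m:ℕ))) ^ N = 1 := by
            rw [← pow_mul]
            exact hdvd _ (dvd_mul_left N _)
          rw [hgeom _ hzN, if_congr (hiff n m) rfl rfl]
      _ = ∑ n : Fin N,
            (C^2/4 * (b n * b (-n)) * ω ^ (((-n : Fin N):ℕ)*(s:ℕ))) * (N:ℂ) := by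
          refine Finset.sum_congr rfl fun n _ => ?_
          rw [show (∑ m : Fin N, (C^2/4 * (b n * b m) * ω ^ ((m:ℕ)*(s:ℕ)))
                * (if m = -n then (N:ℂ) else 0))
              = ∑ m : Fin N, (if m = -n then
                  (C^2/4 * (b n * b m) * ω ^ ((m:ℕ)*(s:ℕ))) * (N:ℂ) else 0) from
            Finset.sum_congr rfl fun m _ => by split_ifs <;> simp]
          rw [Finset.sum_ite_eq' Finset.univ (-n)
            (fun m => (C^2/4 * (b n * b m) * ω ^ ((m:ℕ)*(s:ℕ))) * (N:ℂ)),
            if_pos (Finset.mem_univ _)]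
      _ = ∑ n : Fin N, (C^2/4 * 2 * (N:ℂ)) * ω ^ (((-n : Fin N):ℕ)*(s:ℕ)) := by
          refine Finset.sum_congr rfl fun n _ => ?_
          rw [hbb n]
          ring
      _ = (C^2/4 * 2 * (N:ℂ)) * ∑ n : Fin N, ω ^ (((-n : Fin N):ℕ)*(s:ℕ)) := by
          rw [Finset.mul_sum]
      _ = (C^2/4 * 2 * (N:ℂ)) * ∑ n : Fin N, (ω ^ ((s:ℕ))) ^ ((n:ℕ)) := by
          congr 1
          apply Fintype.sum_equiv (Equiv.neg (Fin N))
          intro x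
          simp only [Equiv.neg_apply, neg_neg]
          rw [← pow_mul, mul_comm]
      _ = (C^2/4 * 2 * (N:ℂ)) * (if ω ^ ((s:ℕ)) = 1 then (N:ℂ) else 0) := by
          rw [hgeom _ (by rw [← pow_mul, mul_comm]; exact hdvd _ (dvd_mul_right N _))]
      _ = if s = 0 then (1:ℂ) else 0 := by
          rw [if_congr hs0 rfl rfl]
          split_ifs
          · linear_combination (1/2 : ℂ) * hC2
          · ring
  -- conclude over ℝ
  apply Complex.ofReal_inj.mp
  rw [Complex.ofReal_sum]
  simp only [Complex.ofReal_mul]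
  rw [main]
  split_ifs <;> simp
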